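/- Let A₀, A₁, B₀, B₁ be self-adjoint operators with A₀² = A₁² = B₀² = B₁² = 1 and [Aₓ, B_y] = 0. Set B̂ = η·1 − (βA₀ + A₀B₀ + A₀B₁ + A₁B₀ − A₁B₁) with η = √(8 + 2β²), for real β with |β| ≤ 2. Then B̂ = (1/(2η))·[B̂² + (βA₁ − A₀(B₀−B₁) − A₁(B₀+B₁))²], and consequently B̂ is positive semidefinite. -/

import Mathlib

open ContinuousLinearMap

set_option maxHeartbeats 1000000

private lemma key_ring {R : Type*} [Ring R] [Module ℂ R] [SMulCommClass ℂ R R] [IsScalarTower ℂ R R] (a b p q : R)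
    (ha : a*a=1) (hb : b*b=1) (hp : p*p=1) (hq : q*q=1)
    (cap : a*p = p*a) (caq : a*q = q*a) (cbp : b*p = p*b) (cbq : b*q = q*b) (s : ℂ) :
    (s • a + a*p + a*q + b*p - b*q) * (s • a + a*p + a*q + b*p - b*q)
    + (s • b - a*(p-q) - b*(p+q)) * (s • b - a*(p-q) - b*(p+q))
    = (8 + 2*s^2) • (1:R) := by
  have e1 : ∀ x : R, p * (a * x) = a * (p * x) := fun x => by rw [← mul_assoc, ← cap, mul_assoc]
  have e2 : ∀ x : R, q * (a * x) = a * (q * x) := fun x => by rw [← mul_assoc, ← caq, mul_assoc]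
  have e3 : ∀ x : R, p * (b * x) = b * (p * x) := fun x => by rw [← mul_assoc, ← cbp, mul_assoc]
  have e4 : ∀ x : R, q * (b * x) = b * (q * x) := fun x => by rw [← mul_assoc, ← cbq, mul_assoc]
  have f1 : ∀ x : R, a * (a * x) = x := fun x => by rw [← mul_assoc, ha, one_mul]
  have f2 : ∀ x : R, b * (b * x) = x := fun x => by rw [← mul_assoc, hb, one_mul]
  have f3 : ∀ x : R, p * (p * x) = x := fun x => by rw [← mul_assoc, hp, one_mul]
  have f4 : ∀ x : R, q * (q * x) = x := fun x => by rw [← mul_assoc, hq, one_mul]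
  simp only [mul_add, add_mul, mul_sub, sub_mul, smul_mul_assoc, mul_smul_comm, smul_smul,
    smul_add, smul_sub, mul_assoc, ← cap, ← caq, ← cbp, ← cbq, e1, e2, e3, e4, f1, f2, f3, f4,
    ha, hb, hp, hq, mul_one]
  module

private lemma smul_isPositive {H : Type*} [NormedAddCommGroup H] [InnerProductSpace ℂ H]
    [CompleteSpace H] {T : H →L[ℂ] H} (hT : T.IsPositive) {c : ℝ} (hc : 0 ≤ c) :
    ((c : ℂ) • T).IsPositive := by
  refine ⟨?_, fun x => ?_⟩
  · exact (hT.smul_of_nonneg (c := (c : ℂ)) (by exact_mod_cast hc)).1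
  · have := hT.2 x
    simp only [reApplyInnerSelf, smul_apply, inner_smul_left, Complex.conj_ofReal] at *
    simpa [Complex.re_ofReal_mul] using mul_nonneg hc this

theorem stmt_3 {H : Type*} [NormedAddCommGroup H] [InnerProductSpace ℂ H] [CompleteSpace H]
    (A₀ A₁ B₀ B₁ : H →L[ℂ] H)
    (hA₀ : IsSelfAdjoint A₀) (hA₁ : IsSelfAdjoint A₁)
    (hB₀ : IsSelfAdjoint B₀) (hB₁ : IsSelfAdjoint B₁)
    (hA₀2 : A₀ * A₀ = 1) (hA₁2 : A₁ * A₁ = 1) (hB₀2 : B₀ * B₀ = 1) (hB₁2 : B₁ * B₁ = 1)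
    (hc00 : A₀ * B₀ = B₀ * A₀) (hc01 : A₀ * B₁ = B₁ * A₀)
    (hc10 : A₁ * B₀ = B₀ * A₁) (hc11 : A₁ * B₁ = B₁ * A₁)
    (β η : ℝ) (hβ : |β| ≤ 2) (hη : η = Real.sqrt (8 + 2 * β ^ 2))
    (Bhat : H →L[ℂ] H)
    (hBhat : Bhat = (η : ℂ) • (1 : H →L[ℂ] H) -
      ((β : ℂ) • A₀ + A₀ * B₀ + A₀ * B₁ + A₁ * B₀ - A₁ * B₁)) :
    Bhat = ((2 * η : ℝ)⁻¹ : ℂ) •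
        (Bhat ^ 2 + ((β : ℂ) • A₁ - A₀ * (B₀ - B₁) - A₁ * (B₀ + B₁)) ^ 2) ∧
      Bhat.IsPositive := by
  set D : H →L[ℂ] H := (β : ℂ) • A₀ + A₀ * B₀ + A₀ * B₁ + A₁ * B₀ - A₁ * B₁ with hD
  set C : H →L[ℂ] H := (β : ℂ) • A₁ - A₀ * (B₀ - B₁) - A₁ * (B₀ + B₁) with hC
  -- positivity of η
  have h8 : (0:ℝ) < 8 + 2 * β ^ 2 := by positivity
  have hηpos : 0 < η := hη ▸ Real.sqrt_pos.mpr h8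
  have hη2 : (η:ℝ) ^ 2 = 8 + 2 * β ^ 2 := by
    rw [hη, Real.sq_sqrt h8.le]
  have hη2c : (η:ℂ) ^ 2 = 8 + 2 * (β:ℂ) ^ 2 := by
    have := congrArg (Complex.ofReal) hη2
    push_cast at this
    exact this
  -- the key algebraic identity
  have hkey : D * D + C * C = ((η:ℂ) ^ 2) • 1 := by
    rw [hD, hC, hη2c]
    have e1 : ∀ x : H →L[ℂ] H, B₀ * (A₀ * x) = A₀ * (B₀ * x) := fun x => by
      rw [← mul_assoc, ← hc00, mul_assoc]
    have e2 : ∀ x : H →L[ℂ] H, B₁ * (A₀ * x) = A₀ * (B₁ * x) := fun x => by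
      rw [← mul_assoc, ← hc01, mul_assoc]
    have e3 : ∀ x : H →L[ℂ] H, B₀ * (A₁ * x) = A₁ * (B₀ * x) := fun x => by
      rw [← mul_assoc, ← hc10, mul_assoc]
    have e4 : ∀ x : H →L[ℂ] H, B₁ * (A₁ * x) = A₁ * (B₁ * x) := fun x => by
      rw [← mul_assoc, ← hc11, mul_assoc]
    have f1 : ∀ x : H →L[ℂ] H, A₀ * (A₀ * x) = x := fun x => by rw [← mul_assoc, hA₀2, one_mul]
    have f2 : ∀ x : H →L[ℂ] H, A₁ * (A₁ * x) = x := fun x => by rw [← mul_assoc, hA₁2, one_mul]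
    have f3 : ∀ x : H →L[ℂ] H, B₀ * (B₀ * x) = x := fun x => by rw [← mul_assoc, hB₀2, one_mul]
    have f4 : ∀ x : H →L[ℂ] H, B₁ * (B₁ * x) = x := fun x => by rw [← mul_assoc, hB₁2, one_mul]
    simp only [mul_add, add_mul, mul_sub, sub_mul, smul_mul_assoc, mul_smul_comm, smul_smul,
      smul_add, smul_sub, mul_assoc, ← hc00, ← hc01, ← hc10, ← hc11, e1, e2, e3, e4, f1, f2, f3,
      f4, hA₀2, hA₁2, hB₀2, hB₁2, mul_one]
    module
  -- main identity : Bhat^2 + C^2 = (2η) • Bhat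
  have expand : ∀ x y : H →L[ℂ] H, ∀ c : ℂ, (c • 1 - x) * (c • 1 - x) + y * y
      = (c ^ 2) • (1 : H →L[ℂ] H) - c • x - c • x + (x * x + y * y) := by
    intro x y c
    simp only [mul_sub, sub_mul, smul_mul_assoc, mul_smul_comm, one_mul, mul_one, smul_smul,
      pow_two]
    module
  have hmain : Bhat ^ 2 + C ^ 2 = ((2 * η : ℝ) : ℂ) • Bhat := by
    rw [hBhat, pow_two, pow_two, expand, hkey]
    push_cast
    module
  have hηne : ((2 * η : ℝ) : ℂ) ≠ 0 := by
    exact_mod_cast (by positivity : (2 * η : ℝ) ≠ 0)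
  have heq : Bhat = ((2 * η : ℝ)⁻¹ : ℂ) • (Bhat ^ 2 + C ^ 2) := by
    rw [hmain, smul_smul, inv_mul_cancel₀ hηne, one_smul]
  refine ⟨heq, ?_⟩
  -- self-adjointness
  have hBsa : IsSelfAdjoint Bhat := by
    rw [hBhat, hD]
    simp only [IsSelfAdjoint, star_sub, star_add, star_smul, star_mul, Complex.star_def,
      Complex.conj_ofReal, hA₀.star_eq, hA₁.star_eq, hB₀.star_eq, hB₁.star_eq, star_one,
      ← hc00, ← hc01, ← hc10, ← hc11]
  have hCsa : IsSelfAdjoint C := by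
    rw [hC]
    simp only [IsSelfAdjoint, star_sub, star_add, star_smul, star_mul, Complex.star_def,
      Complex.conj_ofReal, hA₀.star_eq, hA₁.star_eq, hB₀.star_eq, hB₁.star_eq,
      sub_mul, add_mul, mul_sub, mul_add, ← hc00, ← hc01, ← hc10, ← hc11]
  -- positivity of squares of self-adjoint operators
  have sq_pos : ∀ T : H →L[ℂ] H, IsSelfAdjoint T → (T * T).IsPositive := by
    intro T hT
    have := isPositive_one.conj_adjoint (F := H) T
    simpa [hT.adjoint_eq, ← mul_def] using this
  have : (Bhat ^ 2 + C ^ 2).IsPositive := by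
    rw [pow_two, pow_two]
    exact (sq_pos _ hBsa).add (sq_pos _ hCsa)
  rw [heq, ← Complex.ofReal_inv]
  exact smul_isPositive this (by positivity)
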